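/- arXiv:0708.2566 — 3 statements merged into one kernel-verified Lean document; each statement's English description precedes it below -/
import Mathlib

section
/- Fix x ∈ X and let Z be a random variable on the finite alphabet Z with distribution P(Z = z) = Π(x,z). Suppose H satisfies ΠH = I, i.e., Σ_z Π(a,z)·H(z,b) = δ(a,b) for all a,b ∈ X. Define for a single-symbol denoiser s : Z → X̂ the estimated loss ℓ(z,s) = Σ_{x'∈X} H(z,x')·ρ_{x'}(s), where ρ_{x'}(s) = Σ_z Λ(x', s(z))·Π(x',z). Then E[ℓ(Z,s)] = E[Λ(x, s(Z))], i.e., ℓ(Z,s) is an unbiased estimate of the true expected loss. -/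
/-- The estimated loss `ℓ(z,s) = ∑_{x'} H(z,x') ρ_{x'}(s)` (with
`ρ_{x'}(s) = ∑_z Λ(x',s(z)) Π(x',z)`) is an unbiased estimate of the true expected
loss: `E[ℓ(Z,s)] = E[Λ(x, s(Z))]` when `Z ~ Π(x,·)` and `ΠH = I`. -/
theorem estimated_loss_unbiased {X Z Xh : Type*} [Fintype X] [Fintype Z] [Fintype Xh]
    [DecidableEq X]
    (Λ : X → Xh → ℝ) (hΛ : ∀ a b, 0 ≤ Λ a b)
    (P : X → Z → ℝ) (hPnn : ∀ a z, 0 ≤ P a z) (hPsum : ∀ a, ∑ z, P a z = 1)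
    (H : Z → X → ℝ)
    (hPH : ∀ a b, ∑ z, P a z * H z b = if a = b then (1 : ℝ) else 0)
    (x : X) (s : Z → Xh) :
    ∑ z, P x z * (∑ x', H z x' * (∑ z', Λ x' (s z') * P x' z')) =
      ∑ z, P x z * Λ x (s z) := by
  have : ∑ z, P x z * (∑ x', H z x' * (∑ z', Λ x' (s z') * P x' z')) =
      ∑ x', (∑ z, P x z * H z x') * (∑ z', Λ x' (s z') * P x' z') := by
    simp only [Finset.mul_sum, Finset.sum_mul, mul_assoc]
    rw [Finset.sum_comm]
    exact Finset.sum_congr rfl fun _ _ => Finset.sum_comm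
  rw [this]
  simp only [hPH]
  rw [Finset.sum_eq_single x (by intro b _ hb; simp [Ne.symm hb]) (by simp)]
  simp [mul_comm]
end

section
/- Fix ε > 0, an individual sequence x₁,...,xₙ ∈ X, independent noisy observations Zₜ ~ Π(xₜ,·), and a fixed tuple S = (s₁,...,sₙ) of single-symbol denoisers. Let L_S(xⁿ,Zⁿ) = (1/n)Σₜ Λ(xₜ,sₜ(Zₜ)) and L̃_S(Zⁿ) = (1/n)Σₜ ℓ(Zₜ,sₜ). Then P(L_S(xⁿ,Zⁿ) − L̃_S(Zⁿ) > ε) ≤ exp(−2nε²/L_max²) and P(L̃_S(Zⁿ) − L_S(xⁿ,Zⁿ) > ε) ≤ exp(−2nε²/L_max²), where L_max = Λ_max + ℓ_max. -/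
open Real

private lemma hoeff_aux (p : ℝ) (hp0 : 0 ≤ p) (hp1 : p ≤ 1) (h : ℝ) :
    -(p * h) + Real.log (1 - p + p * Real.exp h) ≤ h ^ 2 / 8 := by
  have hg : ∀ u : ℝ, 0 < 1 - p + p * Real.exp u := by
    intro u
    rcases hp1.lt_or_eq with h1 | h1
    · have : 0 ≤ p * Real.exp u := mul_nonneg hp0 (exp_pos u).le
      linarith
    · have : p * Real.exp u = Real.exp u := by rw [h1, one_mul]
      rw [this]; have := exp_pos u; linarith
  set φ : ℝ → ℝ := fun u => u ^ 2 / 8 + p * u - Real.log (1 - p + p * Real.exp u) with hφdef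
  set ψ : ℝ → ℝ := fun u => u / 4 + p - p * Real.exp u / (1 - p + p * Real.exp u) with hψdef
  have hg' : ∀ u : ℝ, HasDerivAt (fun v => 1 - p + p * Real.exp v) (p * Real.exp u) u := by
    intro u
    exact ((Real.hasDerivAt_exp u).const_mul p).const_add (1 - p)
  have hφ' : ∀ u : ℝ, HasDerivAt φ (ψ u) u := by
    intro u
    have h1 : HasDerivAt (fun v : ℝ => v ^ 2 / 8) (u / 4) u := by
      have := (hasDerivAt_pow 2 u).div_const 8
      refine this.congr_deriv ?_
      push_cast; ring
    have h2 : HasDerivAt (fun v : ℝ => p * v) p u := (hasDerivAt_id u).const_mul p |>.congr_deriv (by ring)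
    have h3 : HasDerivAt (fun v => Real.log (1 - p + p * Real.exp v))
        (p * Real.exp u / (1 - p + p * Real.exp u)) u := (hg' u).log (hg u).ne'
    have := (h1.add h2).sub h3
    exact this
  have hψ' : ∀ u : ℝ, HasDerivAt ψ
      (1 / 4 - p * (1 - p) * Real.exp u / (1 - p + p * Real.exp u) ^ 2) u := by
    intro u
    have h1 : HasDerivAt (fun v : ℝ => v / 4 + p) (1 / 4) u := by
      simpa using ((hasDerivAt_id u).div_const 4).add_const p
    have h2 : HasDerivAt (fun v => p * Real.exp v / (1 - p + p * Real.exp v))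
        ((p * Real.exp u * (1 - p + p * Real.exp u) - p * Real.exp u * (p * Real.exp u)) /
          (1 - p + p * Real.exp u) ^ 2) u :=
      ((Real.hasDerivAt_exp u).const_mul p).div (hg' u) (hg u).ne'
    have := h1.sub h2
    refine this.congr_deriv ?_
    have hne := (hg u).ne'
    congr 1
    field_simp
    ring
  have hψ0 : ψ 0 = 0 := by
    simp only [hψdef, Real.exp_zero, mul_one, sub_add_cancel, div_one]
    ring
  have hmono : Monotone ψ := by
    apply monotone_of_deriv_nonneg (fun u => (hψ' u).differentiableAt)
    intro u
    rw [(hψ' u).deriv, sub_nonneg, div_le_iff₀ (pow_pos (hg u) 2)]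
    nlinarith [Real.exp_pos u, sq_nonneg ((1 - p) - p * Real.exp u)]
  have hφmono : MonotoneOn φ (Set.Ici 0) := by
    apply monotoneOn_of_deriv_nonneg (convex_Ici 0)
      (fun u _ => (hφ' u).continuousAt.continuousWithinAt)
      (fun u _ => (hφ' u).differentiableAt.differentiableWithinAt)
    intro u hu
    rw [interior_Ici] at hu
    rw [(hφ' u).deriv]
    have := hmono (le_of_lt hu)
    linarith [hψ0]
  have hφanti : AntitoneOn φ (Set.Iic 0) := by
    apply antitoneOn_of_deriv_nonpos (convex_Iic 0)
      (fun u _ => (hφ' u).continuousAt.continuousWithinAt)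
      (fun u _ => (hφ' u).differentiableAt.differentiableWithinAt)
    intro u hu
    rw [interior_Iic] at hu
    rw [(hφ' u).deriv]
    have := hmono (le_of_lt hu)
    linarith [hψ0]
  have hφ0 : φ 0 = 0 := by
    simp [hφdef]
  have hkey : 0 ≤ φ h := by
    rcases le_total 0 h with hh | hh
    · have := hφmono Set.self_mem_Ici (Set.mem_Ici.mpr hh) hh
      linarith
    · have := hφanti (Set.mem_Iic.mpr hh) Set.self_mem_Iic hh
      linarith
  simp only [hφdef] at hkey
  linarith

open MeasureTheory ProbabilityTheory

private lemma hoeffding_mgf {Ω : Type*} [MeasurableSpace Ω] (μ : Measure Ω)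
    [IsProbabilityMeasure μ] (Y : Ω → ℝ) (hY : Measurable Y) (a b : ℝ)
    (hab : ∀ ω, a ≤ Y ω ∧ Y ω ≤ b) (hmean : ∫ ω, Y ω ∂μ = 0) (t : ℝ) :
    mgf Y μ t ≤ Real.exp (t ^ 2 * (b - a) ^ 2 / 8) := by
  have hYint : Integrable Y μ := by
    refine (integrable_const (max |a| |b|)).mono' hY.aestronglyMeasurable (ae_of_all _ fun ω => ?_)
    rw [Real.norm_eq_abs]
    refine abs_le.mpr ⟨?_, ?_⟩
    · have := (hab ω).1
      have h2 : -|a| ≤ a := neg_abs_le a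
      have h3 : -|a| ≥ -(max |a| |b|) := by
        simp only [ge_iff_le, neg_le_neg_iff]; exact le_max_left _ _
      linarith
    · exact (hab ω).2.trans ((le_abs_self b).trans (le_max_right _ _))
  have ha0 : a ≤ 0 := by
    have := integral_mono (integrable_const a) hYint (fun ω => (hab ω).1)
    rw [integral_const, hmean] at this
    simpa using this
  have hb0 : 0 ≤ b := by
    have := integral_mono hYint (integrable_const b) (fun ω => (hab ω).2)
    rw [integral_const, hmean] at this
    simpa using this
  rcases eq_or_lt_of_le (ha0.trans hb0) with heq | hlt
  · -- a = 0 = b: Y is identically 0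
    have hY0 : ∀ ω, Y ω = 0 := fun ω =>
      le_antisymm (by have := (hab ω).2; linarith) (by have := (hab ω).1; linarith)
    have : mgf Y μ t = 1 := by
      simp [mgf, hY0]
    rw [this]
    exact Real.one_le_exp (by positivity)
  · set p : ℝ := -a / (b - a) with hpdef
    set hh : ℝ := t * (b - a) with hhdef
    have hba : (0:ℝ) < b - a := sub_pos.mpr hlt
    have hp0 : 0 ≤ p := div_nonneg (by linarith) hba.le
    have hp1 : p ≤ 1 := by
      rw [hpdef, div_le_one hba]; linarith
    set c1 : ℝ := (Real.exp (t * b) - Real.exp (t * a)) / (b - a) with hc1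
    set c0 : ℝ := (b * Real.exp (t * a) - a * Real.exp (t * b)) / (b - a) with hc0
    have hpt : ∀ ω, Real.exp (t * Y ω) ≤ c0 + c1 * Y ω := by
      intro ω
      set y := Y ω with hy
      have hy1 : a ≤ y := (hab ω).1
      have hy2 : y ≤ b := (hab ω).2
      have hu : 0 ≤ (b - y) / (b - a) := div_nonneg (by linarith) hba.le
      have hv : 0 ≤ (y - a) / (b - a) := div_nonneg (by linarith) hba.le
      have huv : (b - y) / (b - a) + (y - a) / (b - a) = 1 := by
        field_simp
        ring
      have hconv := convexOn_exp.2 (Set.mem_univ (t * a)) (Set.mem_univ (t * b)) hu hv huv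
      have harg : ((b - y) / (b - a)) • (t * a) + ((y - a) / (b - a)) • (t * b) = t * y := by
        simp only [smul_eq_mul]
        field_simp
        ring
      rw [harg] at hconv
      refine hconv.trans (le_of_eq ?_)
      simp only [smul_eq_mul, hc0, hc1]
      field_simp
      ring
  -- integrate the pointwise bound
    have hexp_int : Integrable (fun ω => Real.exp (t * Y ω)) μ := by
      refine (integrable_const (Real.exp (|t| * max |a| |b|))).mono'
        ((hY.const_mul t).exp.aestronglyMeasurable) (ae_of_all _ fun ω => ?_)
      rw [Real.norm_eq_abs, abs_of_pos (Real.exp_pos _), Real.exp_le_exp]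
      calc t * Y ω ≤ |t * Y ω| := le_abs_self _
        _ = |t| * |Y ω| := abs_mul t (Y ω)
        _ ≤ |t| * max |a| |b| := by
            refine mul_le_mul_of_nonneg_left ?_ (abs_nonneg t)
            refine abs_le.mpr ⟨?_, (hab ω).2.trans ((le_abs_self b).trans (le_max_right _ _))⟩
            have := (hab ω).1
            have h2 : -|a| ≤ a := neg_abs_le a
            have h3 : -(max |a| |b|) ≤ -|a| := by
              simp only [neg_le_neg_iff]; exact le_max_left _ _
            linarith
    have hint_rhs : Integrable (fun ω => c0 + c1 * Y ω) μ :=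
      (integrable_const c0).add (hYint.const_mul c1)
    have hmgf_le : mgf Y μ t ≤ c0 := by
      have := integral_mono hexp_int hint_rhs hpt
      rwa [integral_add (integrable_const c0) (hYint.const_mul c1), integral_const,
        integral_const_mul, hmean, mul_zero, add_zero, probReal_univ,
        one_smul] at this
    refine hmgf_le.trans ?_
    -- c0 = exp(-(p*hh)) * (1 - p + p * exp hh)
    have he1 : Real.exp (t * b) = Real.exp (t * a) * Real.exp hh := by
      rw [← Real.exp_add]; congr 1; rw [hhdef]; ring
    have hc0eq : c0 = Real.exp (-(p * hh)) * (1 - p + p * Real.exp hh) := by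
      have hta : -(p * hh) = t * a := by
        rw [hpdef, hhdef]; field_simp
      rw [hta, hc0, he1, hpdef]
      field_simp
      ring
    have hGpos : 0 < 1 - p + p * Real.exp hh := by
      rcases hp1.lt_or_eq with h1 | h1
      · have : 0 ≤ p * Real.exp hh := mul_nonneg hp0 (Real.exp_pos _).le
        linarith
      · have : p * Real.exp hh = Real.exp hh := by rw [h1, one_mul]
        rw [this]; have := Real.exp_pos hh; linarith
    rw [hc0eq]
    have := hoeff_aux p hp0 hp1 hh
    calc Real.exp (-(p * hh)) * (1 - p + p * Real.exp hh)
        = Real.exp (-(p * hh) + Real.log (1 - p + p * Real.exp hh)) := by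
          rw [Real.exp_add, Real.exp_log hGpos]
      _ ≤ Real.exp (hh ^ 2 / 8) := Real.exp_le_exp.mpr this
      _ = Real.exp (t ^ 2 * (b - a) ^ 2 / 8) := by rw [hhdef]; ring_nf

private lemma hoeffding_tail {Ω ι : Type*} [MeasurableSpace Ω] (μ : Measure Ω)
    [IsProbabilityMeasure μ] [Fintype ι] (Y : ι → Ω → ℝ) (hYmeas : ∀ i, Measurable (Y i))
    (hind : iIndepFun Y μ) (a b : ℝ)
    (hab : ∀ i ω, a ≤ Y i ω ∧ Y i ω ≤ b)
    (hmean : ∀ i, ∫ ω, Y i ω ∂μ = 0) (ε : ℝ) (hε : 0 < ε) (hba : 0 < b - a) :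
    μ {ω | (Fintype.card ι : ℝ) * ε ≤ ∑ i, Y i ω} ≤
      ENNReal.ofReal (Real.exp (-(2 * (Fintype.card ι : ℝ) * ε ^ 2) / (b - a) ^ 2)) := by
  set N : ℝ := (Fintype.card ι : ℝ) with hNdef
  have hN0 : 0 ≤ N := Nat.cast_nonneg _
  set r : ℝ := 4 * ε / (b - a) ^ 2 with hrdef
  have hr : 0 < r := by positivity
  have h_int : ∀ i, Integrable (fun ω => Real.exp (r * Y i ω)) μ := by
    intro i
    refine (integrable_const (Real.exp (r * max |a| |b|))).mono'
      ((hYmeas i).const_mul r).exp.aestronglyMeasurable (ae_of_all _ fun ω => ?_)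
    rw [Real.norm_eq_abs, abs_of_pos (Real.exp_pos _), Real.exp_le_exp]
    refine mul_le_mul_of_nonneg_left ?_ hr.le
    exact (hab i ω).2.trans ((le_abs_self b).trans (le_max_right _ _))
  have h_int_sum : Integrable (fun ω => Real.exp (r * (∑ i, Y i) ω)) μ :=
    hind.integrable_exp_mul_sum hYmeas (fun i _ => h_int i)
  have hch := measure_ge_le_exp_mul_mgf (μ := μ) (X := ∑ i, Y i) (N * ε) hr.le h_int_sum
  have hmgf : mgf (∑ i, Y i) μ r ≤ Real.exp (N * (r ^ 2 * (b - a) ^ 2 / 8)) := by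
    rw [hind.mgf_sum hYmeas]
    calc ∏ i, mgf (Y i) μ r
        ≤ ∏ _i : ι, Real.exp (r ^ 2 * (b - a) ^ 2 / 8) :=
          Finset.prod_le_prod (fun i _ => mgf_nonneg)
            (fun i _ => hoeffding_mgf μ (Y i) (hYmeas i) a b (fun ω => hab i ω) (hmean i) r)
      _ = Real.exp (N * (r ^ 2 * (b - a) ^ 2 / 8)) := by
          rw [Finset.prod_const, Finset.card_univ, ← Real.exp_nat_mul, hNdef]
  have hfinal : (μ {ω | N * ε ≤ (∑ i, Y i) ω}).toReal ≤
      Real.exp (-(2 * N * ε ^ 2) / (b - a) ^ 2) := by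
    refine hch.trans ?_
    calc Real.exp (-r * (N * ε)) * mgf (∑ i, Y i) μ r
        ≤ Real.exp (-r * (N * ε)) * Real.exp (N * (r ^ 2 * (b - a) ^ 2 / 8)) :=
          mul_le_mul_of_nonneg_left hmgf (Real.exp_pos _).le
      _ = Real.exp (-r * (N * ε) + N * (r ^ 2 * (b - a) ^ 2 / 8)) := (Real.exp_add _ _).symm
      _ = Real.exp (-(2 * N * ε ^ 2) / (b - a) ^ 2) := by
          congr 1
          have hD : (b - a) ^ 2 ≠ 0 := pow_ne_zero 2 hba.ne'
          rw [hrdef]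
          field_simp
          ring
  have hset : {ω | N * ε ≤ ∑ i, Y i ω} = {ω | N * ε ≤ (∑ i, Y i) ω} := by
    simp [Finset.sum_apply]
  rw [hset, ← ENNReal.ofReal_toReal (measure_ne_top μ _)]
  exact ENNReal.ofReal_le_ofReal hfinal
/-- Hoeffding–Azuma concentration of the estimated loss around the true
loss: for a fixed tuple of single-symbol denoisers and independent `Zₜ ~ Π(xₜ,·)`,
`P(L − L̃ > ε) ≤ exp(−2nε²/L_max²)` and `P(L̃ − L > ε) ≤ exp(−2nε²/L_max²)`,
with `L_max = Λ_max + ℓ_max`. -/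
theorem loss_concentration {X Z Xh Ω : Type*} [Fintype X] [Fintype Z] [Fintype Xh]
    [Nonempty X] [Nonempty Z] [Nonempty Xh] [DecidableEq X] [DecidableEq Z]
    [MeasurableSpace Z] [MeasurableSingletonClass Z]
    [MeasurableSpace Ω] (μ : Measure Ω) [IsProbabilityMeasure μ]
    (n : ℕ) (hn : 0 < n)
    (Λ : X → Xh → ℝ) (hΛ : ∀ a b, 0 ≤ Λ a b)
    (P : X → Z → ℝ) (H : Z → X → ℝ)
    (hPH : ∀ a b, ∑ z, P a z * H z b = if a = b then (1 : ℝ) else 0)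
    (x : Fin n → X) (s : Fin n → Z → Xh)
    (Zs : Fin n → Ω → Z) (hmeas : ∀ t, Measurable (Zs t))
    (hindep : iIndepFun Zs μ)
    (hdist : ∀ t z, (μ {ω | Zs t ω = z}).toReal = P (x t) z)
    (ε : ℝ) (hε : 0 < ε) :
    let ℓ : Z → (Z → Xh) → ℝ := fun z s0 => ∑ x', H z x' * ∑ z', Λ x' (s0 z') * P x' z'
    let Λmax : ℝ := ⨆ p : X × Xh, Λ p.1 p.2
    let ℓmax : ℝ := (⨆ p : Z × (Z → Xh), ℓ p.1 p.2) - ⨅ p : Z × (Z → Xh), ℓ p.1 p.2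
    let Lmax : ℝ := Λmax + ℓmax
    let Ltrue : Ω → ℝ := fun ω => (1 / (n : ℝ)) * ∑ t, Λ (x t) (s t (Zs t ω))
    let Lest : Ω → ℝ := fun ω => (1 / (n : ℝ)) * ∑ t, ℓ (Zs t ω) (s t)
    μ {ω | Ltrue ω - Lest ω > ε} ≤
        ENNReal.ofReal (Real.exp (-(2 * (n : ℝ) * ε ^ 2) / Lmax ^ 2)) ∧
      μ {ω | Lest ω - Ltrue ω > ε} ≤
        ENNReal.ofReal (Real.exp (-(2 * (n : ℝ) * ε ^ 2) / Lmax ^ 2)) := by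
  intro ℓ Λmax ℓmax Lmax Ltrue Lest
  classical
  have hexp : ∀ (t : Fin n) (f : Z → ℝ), ∫ ω, f (Zs t ω) ∂μ = ∑ z, P (x t) z * f z := by
    intro t f
    have h1 : ∫ ω, f (Zs t ω) ∂μ = ∫ z, f z ∂(μ.map (Zs t)) :=
      (integral_map (hmeas t).aemeasurable
        (measurable_of_countable f).aestronglyMeasurable).symm
    have hpm : IsProbabilityMeasure (μ.map (Zs t)) :=
      Measure.isProbabilityMeasure_map (hmeas t).aemeasurable
    rw [h1, integral_fintype .of_finite]
    refine Finset.sum_congr rfl fun z _ => ?_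
    rw [measureReal_def, Measure.map_apply (hmeas t) (measurableSet_singleton z)]
    have hpre : Zs t ⁻¹' {z} = {ω | Zs t ω = z} := rfl
    rw [hpre, hdist t z, smul_eq_mul]
  have key : ∀ t : Fin n, ∑ z, P (x t) z * ℓ z (s t) = ∑ z, P (x t) z * Λ (x t) (s t z) := by
    intro t
    calc ∑ z, P (x t) z * ℓ z (s t)
        = ∑ z, ∑ x', P (x t) z * H z x' * (∑ z', Λ x' (s t z') * P x' z') := by
          refine Finset.sum_congr rfl fun z _ => ?_
          show P (x t) z * ∑ x', H z x' * ∑ z', Λ x' (s t z') * P x' z' = _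
          rw [Finset.mul_sum]
          exact Finset.sum_congr rfl fun x' _ => by ring
      _ = ∑ x', (∑ z, P (x t) z * H z x') * (∑ z', Λ x' (s t z') * P x' z') := by
          rw [Finset.sum_comm]
          exact Finset.sum_congr rfl fun x' _ => by rw [Finset.sum_mul]
      _ = ∑ x', (if x t = x' then (1:ℝ) else 0) * (∑ z', Λ x' (s t z') * P x' z') :=
          Finset.sum_congr rfl fun x' _ => by rw [hPH (x t) x']
      _ = ∑ z', Λ (x t) (s t z') * P (x t) z' := by
          simp [ite_mul, Finset.sum_ite_eq]
      _ = ∑ z, P (x t) z * Λ (x t) (s t z) := Finset.sum_congr rfl fun z _ => mul_comm _ _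
  have hbddΛ : BddAbove (Set.range fun p : X × Xh => Λ p.1 p.2) :=
    Set.Finite.bddAbove (Set.finite_range _)
  have hΛle : ∀ a b, Λ a b ≤ Λmax := fun a b => le_ciSup hbddΛ (a, b)
  have hbddℓ : BddAbove (Set.range fun p : Z × (Z → Xh) => ℓ p.1 p.2) :=
    Set.Finite.bddAbove (Set.finite_range _)
  have hbddℓ' : BddBelow (Set.range fun p : Z × (Z → Xh) => ℓ p.1 p.2) :=
    Set.Finite.bddBelow (Set.finite_range _)
  set ℓsup : ℝ := ⨆ p : Z × (Z → Xh), ℓ p.1 p.2 with hℓsupdef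
  set ℓinf : ℝ := ⨅ p : Z × (Z → Xh), ℓ p.1 p.2 with hℓinfdef
  have hℓle : ∀ z s0, ℓ z s0 ≤ ℓsup := fun z s0 => le_ciSup hbddℓ (z, s0)
  have hℓge : ∀ z s0, ℓinf ≤ ℓ z s0 := fun z s0 => ciInf_le hbddℓ' (z, s0)
  have hΛmax0 : 0 ≤ Λmax :=
    (hΛ (Classical.arbitrary X) (Classical.arbitrary Xh)).trans (hΛle _ _)
  have hℓsupinf : ℓinf ≤ ℓsup :=
    (hℓge (Classical.arbitrary Z) (Classical.arbitrary _)).trans (hℓle _ _)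
  have hLmaxeq : Lmax = Λmax + (ℓsup - ℓinf) := rfl
  have hLmax0 : 0 ≤ Lmax := by rw [hLmaxeq]; linarith
  have hnr : (0:ℝ) < n := by exact_mod_cast hn
  rcases eq_or_lt_of_le hLmax0 with h0 | hpos
  · have hΛmax' : Λmax = 0 := by rw [hLmaxeq] at h0; linarith
    have hΛ0 : ∀ a b, Λ a b = 0 := fun a b =>
      le_antisymm (hΛmax' ▸ hΛle a b) (hΛ a b)
    have hLt : ∀ ω, Ltrue ω = 0 := by
      intro ω
      show (1/(n:ℝ)) * ∑ t, Λ (x t) (s t (Zs t ω)) = 0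
      simp [hΛ0]
    have hLe : ∀ ω, Lest ω = 0 := by
      intro ω
      show (1/(n:ℝ)) * ∑ t, ℓ (Zs t ω) (s t) = 0
      have hℓ0 : ∀ z s0, ℓ z s0 = 0 := by
        intro z s0
        show ∑ x', H z x' * ∑ z', Λ x' (s0 z') * P x' z' = 0
        simp [hΛ0]
      simp [hℓ0]
    have he1 : {ω | Ltrue ω - Lest ω > ε} = ∅ :=
      Set.eq_empty_iff_forall_notMem.mpr fun ω hω => by
        simp only [Set.mem_setOf_eq, hLt, hLe] at hω; linarith
    have he2 : {ω | Lest ω - Ltrue ω > ε} = ∅ :=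
      Set.eq_empty_iff_forall_notMem.mpr fun ω hω => by
        simp only [Set.mem_setOf_eq, hLt, hLe] at hω; linarith
    rw [he1, he2]
    simp
  · set g : Fin n → Z → ℝ := fun t z => Λ (x t) (s t z) - ℓ z (s t) with hgdef
    set g2 : Fin n → Z → ℝ := fun t z => ℓ z (s t) - Λ (x t) (s t z) with hg2def
    have hab : ∀ t z, -ℓsup ≤ g t z ∧ g t z ≤ Λmax - ℓinf := by
      intro t z
      have h1 := hℓle z (s t); have h2 := hℓge z (s t)
      have h3 := hΛ (x t) (s t z); have h4 := hΛle (x t) (s t z)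
      constructor
      · show -ℓsup ≤ Λ (x t) (s t z) - ℓ z (s t); linarith
      · show Λ (x t) (s t z) - ℓ z (s t) ≤ Λmax - ℓinf; linarith
    have hab2 : ∀ t z, ℓinf - Λmax ≤ g2 t z ∧ g2 t z ≤ ℓsup := by
      intro t z
      have h1 := hℓle z (s t); have h2 := hℓge z (s t)
      have h3 := hΛ (x t) (s t z); have h4 := hΛle (x t) (s t z)
      constructor
      · show ℓinf - Λmax ≤ ℓ z (s t) - Λ (x t) (s t z); linarith
      · show ℓ z (s t) - Λ (x t) (s t z) ≤ ℓsup; linarith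
    have hba : Λmax - ℓinf - -ℓsup = Lmax := by rw [hLmaxeq]; ring
    have hba2 : ℓsup - (ℓinf - Λmax) = Lmax := by rw [hLmaxeq]; ring
    have hYmeas : ∀ t, Measurable (fun ω => g t (Zs t ω)) :=
      fun t => (measurable_of_countable (g t)).comp (hmeas t)
    have hYmeas2 : ∀ t, Measurable (fun ω => g2 t (Zs t ω)) :=
      fun t => (measurable_of_countable (g2 t)).comp (hmeas t)
    have hindepY : iIndepFun (fun t ω => g t (Zs t ω)) μ :=
      hindep.comp g fun t => measurable_of_countable _
    have hindepY2 : iIndepFun (fun t ω => g2 t (Zs t ω)) μ :=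
      hindep.comp g2 fun t => measurable_of_countable _
    have hmeanY : ∀ t, ∫ ω, g t (Zs t ω) ∂μ = 0 := by
      intro t
      rw [hexp t (g t)]
      have e1 : ∑ z, P (x t) z * g t z =
          ∑ z, P (x t) z * Λ (x t) (s t z) - ∑ z, P (x t) z * ℓ z (s t) := by
        rw [← Finset.sum_sub_distrib]
        exact Finset.sum_congr rfl fun z _ => by simp only [hgdef]; ring
      rw [e1, key t, sub_self]
    have hmeanY2 : ∀ t, ∫ ω, g2 t (Zs t ω) ∂μ = 0 := by
      intro t
      rw [hexp t (g2 t)]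
      have e1 : ∑ z, P (x t) z * g2 t z =
          ∑ z, P (x t) z * ℓ z (s t) - ∑ z, P (x t) z * Λ (x t) (s t z) := by
        rw [← Finset.sum_sub_distrib]
        exact Finset.sum_congr rfl fun z _ => by simp only [hg2def]; ring
      rw [e1, key t, sub_self]
    have tail1 := hoeffding_tail μ (fun t ω => g t (Zs t ω)) hYmeas hindepY
      (-ℓsup) (Λmax - ℓinf) (fun t ω => hab t (Zs t ω)) hmeanY ε hε (by rw [hba]; exact hpos)
    have tail2 := hoeffding_tail μ (fun t ω => g2 t (Zs t ω)) hYmeas2 hindepY2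
      (ℓinf - Λmax) ℓsup (fun t ω => hab2 t (Zs t ω)) hmeanY2 ε hε (by rw [hba2]; exact hpos)
    rw [show Λmax - ℓinf - -ℓsup = Lmax from hba, Fintype.card_fin] at tail1
    rw [show ℓsup - (ℓinf - Λmax) = Lmax from hba2, Fintype.card_fin] at tail2
    constructor
    · refine le_trans (measure_mono ?_) tail1
      intro ω hω
      simp only [Set.mem_setOf_eq] at hω ⊢
      have hsum : ∑ t, g t (Zs t ω) =
          (∑ t, Λ (x t) (s t (Zs t ω))) - ∑ t, ℓ (Zs t ω) (s t) := by
        rw [← Finset.sum_sub_distrib]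
      have hL : Ltrue ω - Lest ω = (1/(n:ℝ)) * ∑ t, g t (Zs t ω) := by
        show (1/(n:ℝ)) * ∑ t, Λ (x t) (s t (Zs t ω)) -
          (1/(n:ℝ)) * ∑ t, ℓ (Zs t ω) (s t) = _
        rw [hsum]; ring
      rw [hL] at hω
      have h2 : (n:ℝ) * ((1/(n:ℝ)) * ∑ t, g t (Zs t ω)) = ∑ t, g t (Zs t ω) := by
        field_simp
      have h3 := mul_lt_mul_of_pos_left hω hnr
      rw [h2] at h3
      exact h3.le
    · refine le_trans (measure_mono ?_) tail2
      intro ω hω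
      simp only [Set.mem_setOf_eq] at hω ⊢
      have hsum : ∑ t, g2 t (Zs t ω) =
          (∑ t, ℓ (Zs t ω) (s t)) - ∑ t, Λ (x t) (s t (Zs t ω)) := by
        rw [← Finset.sum_sub_distrib]
      have hL : Lest ω - Ltrue ω = (1/(n:ℝ)) * ∑ t, g2 t (Zs t ω) := by
        show (1/(n:ℝ)) * ∑ t, ℓ (Zs t ω) (s t) -
          (1/(n:ℝ)) * ∑ t, Λ (x t) (s t (Zs t ω)) = _
        rw [hsum]; ring
      rw [hL] at hω
      have h2 : (n:ℝ) * ((1/(n:ℝ)) * ∑ t, g2 t (Zs t ω)) = ∑ t, g2 t (Zs t ω) := by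
        field_simp
      have h3 := mul_lt_mul_of_pos_left hω hnr
      rw [h2] at h3
      exact h3.le
end

section
/- Fix ε > 0 and an individual sequence xⁿ ∈ Xⁿ with independent noisy observations Zₜ ~ Π(xₜ,·). Let Ŝ = argmin over S ∈ S_{0,m}^n of L̃_S(Zⁿ), and let D_{0,m}(xⁿ,Zⁿ) = min over S ∈ S_{0,m}^n of L_S(xⁿ,Zⁿ). Then P(L_{Ŝ}(xⁿ,Zⁿ) − D_{0,m}(xⁿ,Zⁿ) > ε) ≤ 2·exp(−n·[ε²/(2L_max²) − 2{h(m/n) + (m+1)ln N / n}]), where N = |X̂|^{|Z|} and h is binary entropy. -/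
open MeasureTheory ProbabilityTheory

/-- Binary entropy function (natural logarithm), with the convention `h 0 = 0`. -/
noncomputable def binEntropy (x : ℝ) : ℝ := -x * Real.log x - (1 - x) * Real.log (1 - x)

section Aux

variable {α : Type*} [DecidableEq α]

lemma aux_bernoulli_mgf (p : ℝ) (hp0 : 0 ≤ p) (hp1 : p ≤ 1) (u : ℝ) :
    1 - p + p * Real.exp u ≤ Real.exp (p * u + u ^ 2 / 8) := by
  set d : ℝ → ℝ := fun v => 1 - p + p * Real.exp v with hd_def
  have hd : ∀ v, 0 < d v := by
    intro v
    simp only [hd_def]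
    nlinarith [Real.exp_pos v, mul_nonneg hp0 (Real.exp_pos v).le]
  set F : ℝ → ℝ := fun v => p * v + v ^ 2 / 8 - Real.log (d v) with hF_def
  set G : ℝ → ℝ := fun v => p + v / 4 - p * Real.exp v / d v with hG_def
  have hd' : ∀ v, HasDerivAt d (p * Real.exp v) v := by
    intro v
    exact ((Real.hasDerivAt_exp v).const_mul p).const_add (1 - p)
  have hF' : ∀ v, HasDerivAt F (G v) v := by
    intro v
    have h1 := ((hasDerivAt_id v).const_mul p).add ((hasDerivAt_pow 2 v).div_const 8)
    have h2 : HasDerivAt (fun w => Real.log (d w)) (p * Real.exp v / d v) v :=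
      (hd' v).log (hd v).ne'
    have := h1.sub h2
    refine this.congr_deriv ?_
    simp [hG_def]
    ring
  have hG' : ∀ v, HasDerivAt G (1 / 4 - p * (1 - p) * Real.exp v / (d v) ^ 2) v := by
    intro v
    have h1 : HasDerivAt (fun w : ℝ => p + w / 4) (1 / 4) v := by
      simpa using ((hasDerivAt_id v).div_const 4).const_add p
    have h2 : HasDerivAt (fun w => p * Real.exp w / d w)
        ((p * Real.exp v * d v - p * Real.exp v * (p * Real.exp v)) / (d v) ^ 2) v :=
      ((Real.hasDerivAt_exp v).const_mul p).div (hd' v) (hd v).ne'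
    have := h1.sub h2
    refine this.congr_deriv ?_
    have hne := (hd v).ne'
    field_simp
    ring
  have hG'nonneg : ∀ v, 0 ≤ 1 / 4 - p * (1 - p) * Real.exp v / (d v) ^ 2 := by
    intro v
    have h2 : p * (1 - p) * Real.exp v / (d v) ^ 2 ≤ 1 / 4 := by
      rw [div_le_iff₀ (pow_pos (hd v) 2)]
      have : (d v) ^ 2 - 4 * (p * (1 - p) * Real.exp v) = ((1 - p) - p * Real.exp v) ^ 2 := by
        simp only [hd_def]; ring
      nlinarith [sq_nonneg ((1 - p) - p * Real.exp v)]
    linarith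
  have hGdiff : Differentiable ℝ G := fun v => (hG' v).differentiableAt
  have hGmono : Monotone G := by
    apply monotone_of_deriv_nonneg hGdiff
    intro v
    rw [(hG' v).deriv]
    exact hG'nonneg v
  have hG0 : G 0 = 0 := by
    simp only [hG_def, hd_def, Real.exp_zero, mul_one]
    have : 1 - p + p = 1 := by ring
    rw [this]
    ring
  have hF0 : F 0 = 0 := by
    have : d 0 = 1 := by simp [hd_def]
    simp [hF_def, this]
  have hFnonneg : ∀ v, 0 ≤ F v := by
    intro v
    rcases le_total 0 v with hv | hv
    · have hmono : MonotoneOn F (Set.Ici (0 : ℝ)) := by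
        apply monotoneOn_of_deriv_nonneg (convex_Ici 0)
        · exact fun w _ => ((hF' w).differentiableAt).continuousAt.continuousWithinAt
        · exact fun w _ => ((hF' w).differentiableAt).differentiableWithinAt
        · intro w hw
          rw [(hF' w).deriv]
          rw [interior_Ici] at hw
          have : G 0 ≤ G w := hGmono (le_of_lt hw)
          linarith [hG0 ▸ this]
      have := hmono (Set.self_mem_Ici) (Set.mem_Ici.mpr hv) hv
      linarith [hF0 ▸ this]
    · have hanti : AntitoneOn F (Set.Iic (0 : ℝ)) := by
        apply antitoneOn_of_deriv_nonpos (convex_Iic 0)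
        · exact fun w _ => ((hF' w).differentiableAt).continuousAt.continuousWithinAt
        · exact fun w _ => ((hF' w).differentiableAt).differentiableWithinAt
        · intro w hw
          rw [(hF' w).deriv]
          rw [interior_Iic] at hw
          have : G w ≤ G 0 := hGmono (le_of_lt hw)
          linarith [hG0 ▸ this]
      have := hanti (Set.mem_Iic.mpr hv) (Set.self_mem_Iic) hv
      linarith [hF0 ▸ this]
  have hlog : Real.log (d u) ≤ p * u + u ^ 2 / 8 := by
    have := hFnonneg u
    simp only [hF_def] at this
    linarith
  calc d u = Real.exp (Real.log (d u)) := (Real.exp_log (hd u)).symm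
    _ ≤ Real.exp (p * u + u ^ 2 / 8) := Real.exp_le_exp.mpr hlog


lemma aux_hoeffding_mgf {Ω : Type*} [MeasurableSpace Ω] (μ : Measure Ω) [IsProbabilityMeasure μ]
    (X : Ω → ℝ) (hX : Measurable X) (a b : ℝ) (hab : ∀ ω, X ω ∈ Set.Icc a b)
    (hmean : ∫ ω, X ω ∂μ = 0) (t : ℝ) :
    mgf X μ t ≤ Real.exp (t ^ 2 * (b - a) ^ 2 / 8) := by
  have hXint : Integrable X μ := by
    refine (integrable_const (max |a| |b|)).mono' hX.aestronglyMeasurable ?_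
    filter_upwards with ω
    rw [Real.norm_eq_abs]
    exact abs_le_max_abs_abs (hab ω).1 (hab ω).2
  have ha0 : a ≤ 0 := by
    have h1 : ∫ _ω, a ∂μ ≤ ∫ ω, X ω ∂μ :=
      integral_mono (integrable_const a) hXint (fun ω => (hab ω).1)
    rw [integral_const, probReal_univ] at h1
    simpa [hmean] using h1
  have hb0 : 0 ≤ b := by
    have h1 : ∫ ω, X ω ∂μ ≤ ∫ _ω, b ∂μ :=
      integral_mono hXint (integrable_const b) (fun ω => (hab ω).2)
    rw [integral_const, probReal_univ] at h1
    simpa [hmean] using h1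
  rcases eq_or_lt_of_le (ha0.trans hb0) with hEq | hlt
  · -- a = 0 = b, so X ≡ 0
    have ha : a = 0 := le_antisymm ha0 (by rw [hEq]; exact hb0)
    have hb : b = 0 := hEq.symm.trans ha
    have hX0 : ∀ ω, X ω = 0 := by
      intro ω
      have h1 := (hab ω).1
      have h2 := (hab ω).2
      rw [ha] at h1; rw [hb] at h2
      linarith
    have : mgf X μ t = 1 := by
      rw [mgf]
      simp_rw [hX0, mul_zero, Real.exp_zero]
      simp
    rw [this]
    exact Real.one_le_exp (by positivity)
  · have hba : 0 < b - a := sub_pos.mpr hlt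
    -- pointwise convexity bound
    have hpt : ∀ ω, Real.exp (t * X ω) ≤
        ((b - X ω) * Real.exp (t * a) + (X ω - a) * Real.exp (t * b)) / (b - a) := by
      intro ω
      have hx1 := (hab ω).1
      have hx2 := (hab ω).2
      have hw1 : 0 ≤ (b - X ω) / (b - a) := div_nonneg (by linarith) hba.le
      have hw2 : 0 ≤ (X ω - a) / (b - a) := div_nonneg (by linarith) hba.le
      have hsum : (b - X ω) / (b - a) + (X ω - a) / (b - a) = 1 := by
        field_simp
        ring
      have := convexOn_exp.2 (Set.mem_univ (t * a)) (Set.mem_univ (t * b)) hw1 hw2 hsum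
      simp only [smul_eq_mul] at this
      have harg : (b - X ω) / (b - a) * (t * a) + (X ω - a) / (b - a) * (t * b) = t * X ω := by
        field_simp
        ring
      rw [harg] at this
      calc Real.exp (t * X ω) ≤
          (b - X ω) / (b - a) * Real.exp (t * a) + (X ω - a) / (b - a) * Real.exp (t * b) := this
        _ = ((b - X ω) * Real.exp (t * a) + (X ω - a) * Real.exp (t * b)) / (b - a) := by
            field_simp
            try ring
    -- integrate
    have hInt : Integrable (fun ω => Real.exp (t * X ω)) μ := by
      refine (integrable_const (Real.exp (|t| * max |a| |b|))).mono'
        ((hX.const_mul t).exp).aestronglyMeasurable ?_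
      filter_upwards with ω
      rw [Real.norm_eq_abs, abs_of_pos (Real.exp_pos _)]
      apply Real.exp_le_exp.mpr
      calc t * X ω ≤ |t * X ω| := le_abs_self _
        _ = |t| * |X ω| := abs_mul _ _
        _ ≤ |t| * max |a| |b| := by
            apply mul_le_mul_of_nonneg_left _ (abs_nonneg t)
            exact abs_le_max_abs_abs (hab ω).1 (hab ω).2
    have hK : mgf X μ t ≤ (b * Real.exp (t * a) - a * Real.exp (t * b)) / (b - a) := by
      have hrhs_eq : ∀ ω, ((b - X ω) * Real.exp (t * a) + (X ω - a) * Real.exp (t * b)) / (b - a)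
          = (b * Real.exp (t * a) - a * Real.exp (t * b)) / (b - a)
            + ((Real.exp (t * b) - Real.exp (t * a)) / (b - a)) * X ω := by
        intro ω; field_simp; ring
      have h1 : mgf X μ t ≤ ∫ ω, ((b * Real.exp (t * a) - a * Real.exp (t * b)) / (b - a)
            + ((Real.exp (t * b) - Real.exp (t * a)) / (b - a)) * X ω) ∂μ := by
        rw [mgf]
        refine integral_mono hInt ?_ (fun ω => (hrhs_eq ω) ▸ hpt ω)
        exact (integrable_const _).add (hXint.const_mul _)
      rw [integral_add (integrable_const _) (hXint.const_mul _), integral_const,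
        probReal_univ, integral_const_mul, hmean] at h1
      simpa using h1
    refine hK.trans ?_
    -- now the scalar bound
    set p : ℝ := -a / (b - a) with hp_def
    have hp0 : 0 ≤ p := div_nonneg (by linarith) hba.le
    have hp1 : p ≤ 1 := by
      rw [hp_def, div_le_one hba]
      linarith
    have hkey := aux_bernoulli_mgf p hp0 hp1 (t * (b - a))
    have hEq1 : (b * Real.exp (t * a) - a * Real.exp (t * b)) / (b - a)
        = Real.exp (t * a) * (1 - p + p * Real.exp (t * (b - a))) := by
      rw [hp_def]
      have : Real.exp (t * a) * Real.exp (t * (b - a)) = Real.exp (t * b) := by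
        rw [← Real.exp_add]; ring_nf
      rw [← this]
      field_simp
      ring
    rw [hEq1]
    calc Real.exp (t * a) * (1 - p + p * Real.exp (t * (b - a)))
        ≤ Real.exp (t * a) * Real.exp (p * (t * (b - a)) + (t * (b - a)) ^ 2 / 8) := by
          exact mul_le_mul_of_nonneg_left hkey (Real.exp_pos _).le
      _ = Real.exp (t * a + p * (t * (b - a)) + (t * (b - a)) ^ 2 / 8) := by
          rw [← Real.exp_add]; ring_nf
      _ = Real.exp (t ^ 2 * (b - a) ^ 2 / 8) := by
          congr 1
          rw [hp_def]
          field_simp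
          ring


lemma aux_hoeffding_tail {Ω : Type*} [MeasurableSpace Ω] (μ : Measure Ω) [IsProbabilityMeasure μ]
    (n : ℕ) (hn : 0 < n) (Y : Fin n → Ω → ℝ) (hYm : ∀ i, Measurable (Y i))
    (hind : iIndepFun Y μ) (a b : ℝ) (hab : a < b)
    (hbd : ∀ i ω, Y i ω ∈ Set.Icc a b) (hmean : ∀ i, ∫ ω, Y i ω ∂μ = 0)
    (c : ℝ) (hc : 0 < c) :
    μ {ω | c ≤ ∑ i, Y i ω} ≤ ENNReal.ofReal (Real.exp (-2 * c ^ 2 / (n * (b - a) ^ 2))) := by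
  have hba : (0:ℝ) < b - a := sub_pos.mpr hab
  have hnR : (0:ℝ) < n := Nat.cast_pos.mpr hn
  set t : ℝ := 4 * c / (n * (b - a) ^ 2) with ht_def
  have ht : 0 < t := by positivity
  have hInt : ∀ i : Fin n, Integrable (fun ω => Real.exp (t * Y i ω)) μ := by
    intro i
    refine (integrable_const (Real.exp (t * b))).mono'
      ((hYm i).const_mul t).exp.aestronglyMeasurable ?_
    filter_upwards with ω
    rw [Real.norm_eq_abs, abs_of_pos (Real.exp_pos _)]
    exact Real.exp_le_exp.mpr (mul_le_mul_of_nonneg_left (hbd i ω).2 ht.le)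
  have hsumInt : Integrable (fun ω => Real.exp (t * (∑ i, Y i) ω)) μ :=
    hind.integrable_exp_mul_sum hYm (fun i _ => hInt i)
  have hchern := measure_ge_le_exp_mul_mgf (X := ∑ i, Y i) (μ := μ) c ht.le hsumInt
  have hset : {ω | c ≤ (∑ i, Y i) ω} = {ω | c ≤ ∑ i, Y i ω} := by
    ext ω; simp [Finset.sum_apply]
  rw [hset] at hchern
  have hmgf : mgf (∑ i, Y i) μ t ≤ Real.exp (n * (t ^ 2 * (b - a) ^ 2 / 8)) := by
    rw [hind.mgf_sum hYm Finset.univ]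
    calc (∏ i, mgf (Y i) μ t) ≤ ∏ _i : Fin n, Real.exp (t ^ 2 * (b - a) ^ 2 / 8) := by
          refine Finset.prod_le_prod (fun i _ => mgf_nonneg) (fun i _ => ?_)
          exact aux_hoeffding_mgf μ (Y i) (hYm i) a b (fun ω => hbd i ω) (hmean i) t
      _ = Real.exp (t ^ 2 * (b - a) ^ 2 / 8) ^ n := by
          rw [Finset.prod_const, Finset.card_univ, Fintype.card_fin]
      _ = Real.exp (n * (t ^ 2 * (b - a) ^ 2 / 8)) := by
          rw [Real.exp_nat_mul]
  have hfin : (μ {ω | c ≤ ∑ i, Y i ω}).toReal ≤ Real.exp (-2 * c ^ 2 / (n * (b - a) ^ 2)) := by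
    calc (μ {ω | c ≤ ∑ i, Y i ω}).toReal
        ≤ Real.exp (-t * c) * mgf (∑ i, Y i) μ t := hchern
      _ ≤ Real.exp (-t * c) * Real.exp (n * (t ^ 2 * (b - a) ^ 2 / 8)) :=
          mul_le_mul_of_nonneg_left hmgf (Real.exp_pos _).le
      _ = Real.exp (-t * c + n * (t ^ 2 * (b - a) ^ 2 / 8)) := (Real.exp_add _ _).symm
      _ = Real.exp (-2 * c ^ 2 / (n * (b - a) ^ 2)) := by
          congr 1
          rw [ht_def]
          field_simp
          ring
  rw [ENNReal.le_ofReal_iff_toReal_le (measure_ne_top μ _) (Real.exp_nonneg _)]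
  exact hfin


def auxSw (n : ℕ) (S : Fin n → α) : Finset (Fin n) :=
  Finset.univ.filter (fun t : Fin n =>
    0 < t.val ∧ S t ≠ S ⟨t.val - 1, Nat.lt_of_le_of_lt (Nat.sub_le _ _) t.isLt⟩)

def auxCnt (n : ℕ) (S : Fin n → α) (t : Fin n) : ℕ :=
  ((auxSw n S).filter (fun u => u ≤ t)).card

lemma auxCnt_mono (n : ℕ) (S : Fin n → α) {u v : Fin n} (h : u ≤ v) :
    auxCnt n S u ≤ auxCnt n S v := by
  apply Finset.card_le_card
  apply Finset.monotone_filter_right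
  intro w _ hw
  exact le_trans hw h

lemma auxBlock {n : ℕ} (S : Fin n → α) :
    ∀ (j : ℕ) (hj : j < n) (u : Fin n), u.val ≤ j →
      auxCnt n S u = auxCnt n S ⟨j, hj⟩ → S u = S ⟨j, hj⟩ := by
  intro j
  induction j with
  | zero =>
    intro hj u hu _
    exact congrArg S (Fin.ext (Nat.le_zero.mp hu))
  | succ j ih =>
    intro hj u hu hcnt
    by_cases hu' : u.val = j + 1
    · exact congrArg S (Fin.ext hu')
    · have hu2 : u.val ≤ j := by omega
      have hjn : j < n := Nat.lt_of_succ_lt hj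
      have hut' : u ≤ (⟨j, hjn⟩ : Fin n) := hu2
      have ht't : (⟨j, hjn⟩ : Fin n) ≤ ⟨j + 1, hj⟩ := by
        simp only [Fin.mk_le_mk]; omega
      have h1 : auxCnt n S u ≤ auxCnt n S ⟨j, hjn⟩ := auxCnt_mono n S hut'
      have h2 : auxCnt n S ⟨j, hjn⟩ ≤ auxCnt n S ⟨j + 1, hj⟩ := auxCnt_mono n S ht't
      have hct : auxCnt n S u = auxCnt n S ⟨j, hjn⟩ := le_antisymm h1 (by omega)
      -- j+1 is not a switch
      have htns : (⟨j + 1, hj⟩ : Fin n) ∉ auxSw n S := by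
        intro hmem
        have hins : insert (⟨j + 1, hj⟩ : Fin n)
            ((auxSw n S).filter (fun u' => u' ≤ (⟨j, hjn⟩ : Fin n))) ⊆
            (auxSw n S).filter (fun u' => u' ≤ (⟨j + 1, hj⟩ : Fin n)) := by
          apply Finset.insert_subset
          · exact Finset.mem_filter.mpr ⟨hmem, le_refl _⟩
          · apply Finset.monotone_filter_right
            intro w _ hw
            exact le_trans hw ht't
        have hnotin : (⟨j + 1, hj⟩ : Fin n) ∉
            (auxSw n S).filter (fun u' => u' ≤ (⟨j, hjn⟩ : Fin n)) := by
          intro hmem'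
          have h3 := (Finset.mem_filter.mp hmem').2
          rw [Fin.mk_le_mk] at h3
          omega
        have hcard := Finset.card_le_card hins
        rw [Finset.card_insert_of_notMem hnotin] at hcard
        have : auxCnt n S ⟨j, hjn⟩ + 1 ≤ auxCnt n S ⟨j + 1, hj⟩ := hcard
        omega
      have hSt : S ⟨j + 1, hj⟩ = S ⟨j, hjn⟩ := by
        simp only [auxSw, Finset.mem_filter, Finset.mem_univ, true_and, not_and, ne_eq,
          not_not] at htns
        have h4 := htns (by omega)
        rw [h4]
        exact congrArg S (Fin.ext rfl)
      rw [ih hjn u hu2 hct, ← hSt]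


noncomputable def auxV (n m : ℕ) [Nonempty α] (S : Fin n → α) (i : Fin (m + 1)) : α :=
  if h : (Finset.univ.filter (fun t : Fin n => auxCnt n S t = i.val)).Nonempty
  then S ((Finset.univ.filter (fun t : Fin n => auxCnt n S t = i.val)).min' h)
  else Classical.arbitrary α

lemma auxV_spec {n m : ℕ} [Nonempty α] (S : Fin n → α) (t : Fin n) (h : auxCnt n S t ≤ m) :
    auxV n m S ⟨auxCnt n S t, Nat.lt_succ_of_le h⟩ = S t := by
  have htA : t ∈ Finset.univ.filter (fun u : Fin n => auxCnt n S u = auxCnt n S t) :=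
    Finset.mem_filter.mpr ⟨Finset.mem_univ _, rfl⟩
  have hne : (Finset.univ.filter (fun u : Fin n => auxCnt n S u = auxCnt n S t)).Nonempty :=
    ⟨t, htA⟩
  rw [auxV, dif_pos hne]
  set u := (Finset.univ.filter (fun u : Fin n => auxCnt n S u = auxCnt n S t)).min' hne with hu
  have huA : u ∈ Finset.univ.filter (fun u : Fin n => auxCnt n S u = auxCnt n S t) :=
    Finset.min'_mem _ _
  have hut : u ≤ t := Finset.min'_le _ _ htA
  have hcnt : auxCnt n S u = auxCnt n S t := (Finset.mem_filter.mp huA).2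
  exact auxBlock S t.val t.isLt u hut hcnt

lemma aux_count (n m : ℕ) [Fintype α] [Nonempty α] :
    (Finset.univ.filter (fun S : Fin n → α => (auxSw n S).card ≤ m)).card
      ≤ (∑ k ∈ Finset.range (m + 1), n.choose k) * Fintype.card α ^ (m + 1) := by
  classical
  have hinj : ∀ S1 ∈ Finset.univ.filter (fun S : Fin n → α => (auxSw n S).card ≤ m),
      ∀ S2 ∈ Finset.univ.filter (fun S : Fin n → α => (auxSw n S).card ≤ m),
      (auxSw n S1, fun i : Fin (m+1) => auxV n m S1 i)
        = (auxSw n S2, fun i : Fin (m+1) => auxV n m S2 i) → S1 = S2 := by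
    intro S1 hS1 S2 hS2 heq
    rw [Prod.mk.injEq] at heq
    obtain ⟨hsw, hv⟩ := heq
    have hb1 : (auxSw n S1).card ≤ m := (Finset.mem_filter.mp hS1).2
    have hb2 : (auxSw n S2).card ≤ m := (Finset.mem_filter.mp hS2).2
    funext t
    have h1 : auxCnt n S1 t = auxCnt n S2 t := by
      unfold auxCnt; rw [hsw]
    have hc1 : auxCnt n S1 t ≤ m := le_trans (Finset.card_filter_le _ _) hb1
    have hc2 : auxCnt n S2 t ≤ m := le_trans (Finset.card_filter_le _ _) hb2
    calc S1 t = auxV n m S1 ⟨auxCnt n S1 t, Nat.lt_succ_of_le hc1⟩ := (auxV_spec S1 t hc1).symm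
      _ = auxV n m S2 ⟨auxCnt n S1 t, Nat.lt_succ_of_le hc1⟩ := congrFun hv _
      _ = auxV n m S2 ⟨auxCnt n S2 t, Nat.lt_succ_of_le hc2⟩ := by
          congr 1
          exact Fin.ext h1
      _ = S2 t := auxV_spec S2 t hc2
  have hmaps : ∀ S ∈ Finset.univ.filter (fun S : Fin n → α => (auxSw n S).card ≤ m),
      (auxSw n S, fun i : Fin (m+1) => auxV n m S i) ∈
        (Finset.univ.filter (fun A : Finset (Fin n) => A.card ≤ m)) ×ˢ
          (Finset.univ : Finset (Fin (m + 1) → α)) := by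
    intro S hS
    rw [Finset.mem_product]
    exact ⟨Finset.mem_filter.mpr ⟨Finset.mem_univ _, (Finset.mem_filter.mp hS).2⟩,
      Finset.mem_univ _⟩
  have hcard := Finset.card_le_card_of_injOn _ hmaps hinj
  refine hcard.trans ?_
  rw [Finset.card_product, Finset.card_univ, Fintype.card_fun, Fintype.card_fin]
  apply Nat.mul_le_mul_right
  have hsub : (Finset.univ.filter (fun A : Finset (Fin n) => A.card ≤ m)) ⊆
      (Finset.range (m + 1)).biUnion (fun k => Finset.powersetCard k Finset.univ) := by
    intro A hA
    rw [Finset.mem_biUnion]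
    refine ⟨A.card, Finset.mem_range.mpr (Nat.lt_succ_of_le (Finset.mem_filter.mp hA).2), ?_⟩
    exact Finset.mem_powersetCard.mpr ⟨Finset.subset_univ _, rfl⟩
  refine (Finset.card_le_card hsub).trans ?_
  refine Finset.card_biUnion_le.trans ?_
  apply Finset.sum_le_sum
  intro k _
  rw [Finset.card_powersetCard, Finset.card_univ, Fintype.card_fin]


lemma binEntropy_eq_real (x : ℝ) : binEntropy x = Real.binEntropy x := by
  rw [binEntropy, Real.binEntropy, Real.log_inv, Real.log_inv]; ring

lemma binEntropy_nn {x : ℝ} (h0 : 0 ≤ x) (h1 : x ≤ 1) : 0 ≤ binEntropy x := by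
  rw [binEntropy_eq_real]; exact Real.binEntropy_nonneg h0 h1

lemma aux_sum_choose (n m : ℕ) (hn : 0 < n) (hm : 2 * m ≤ n) :
    ((∑ k ∈ Finset.range (m + 1), n.choose k : ℕ) : ℝ)
      ≤ Real.exp (n * binEntropy (m / n)) := by
  rcases Nat.eq_zero_or_pos m with hm0 | hm1
  · subst hm0
    simp [binEntropy]
  · have hnR : (0:ℝ) < n := Nat.cast_pos.mpr hn
    have hmn : m ≤ n := by omega
    set p : ℝ := m / n with hp_def
    set q : ℝ := ((n - m : ℕ) : ℝ) / n with hq_def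
    have hmR : (0:ℝ) < m := Nat.cast_pos.mpr hm1
    have hp_pos : 0 < p := div_pos hmR hnR
    have hq_pos : 0 < q := by
      apply div_pos _ hnR
      have : (0:ℕ) < n - m := by omega
      exact_mod_cast this
    have hpq : p + q = 1 := by
      rw [hp_def, hq_def, ← add_div]
      rw [div_eq_one_iff_eq hnR.ne']
      push_cast [Nat.cast_sub hmn]
      ring
    have hpq' : p ≤ q := by
      rw [hp_def, hq_def, div_le_div_iff_of_pos_right hnR]
      have : 2 * m ≤ n := hm
      push_cast [Nat.cast_sub hmn]
      have : (2:ℝ) * m ≤ n := by exact_mod_cast hm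
      linarith
    -- partial binomial sum
    have hbinom : ∑ k ∈ Finset.range (n + 1), p ^ k * q ^ (n - k) * (n.choose k : ℝ) = 1 := by
      rw [← add_pow, hpq, one_pow]
    have hterm : ∀ k ∈ Finset.range (m + 1), p ^ m * q ^ (n - m) ≤ p ^ k * q ^ (n - k) := by
      intro k hk
      rw [Finset.mem_range] at hk
      have hkm : k ≤ m := by omega
      have e1 : p ^ m = p ^ k * p ^ (m - k) := by
        rw [← pow_add]; congr 1; omega
      have e2 : q ^ (n - k) = q ^ (m - k) * q ^ (n - m) := by
        rw [← pow_add]; congr 1; omega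
      rw [e1, e2]
      have h3 : p ^ (m - k) ≤ q ^ (m - k) := pow_le_pow_left₀ hp_pos.le hpq' _
      calc p ^ k * p ^ (m - k) * q ^ (n - m) ≤ p ^ k * q ^ (m - k) * q ^ (n - m) := by
            apply mul_le_mul_of_nonneg_right _ (pow_nonneg hq_pos.le _)
            exact mul_le_mul_of_nonneg_left h3 (pow_nonneg hp_pos.le _)
        _ = p ^ k * (q ^ (m - k) * q ^ (n - m)) := by ring
    have hkey : ((∑ k ∈ Finset.range (m + 1), n.choose k : ℕ) : ℝ) * (p ^ m * q ^ (n - m)) ≤ 1 := by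
      push_cast
      rw [Finset.sum_mul]
      calc ∑ k ∈ Finset.range (m + 1), (n.choose k : ℝ) * (p ^ m * q ^ (n - m))
          ≤ ∑ k ∈ Finset.range (m + 1), p ^ k * q ^ (n - k) * (n.choose k : ℝ) := by
            apply Finset.sum_le_sum
            intro k hk
            have := hterm k hk
            have hch : (0:ℝ) ≤ (n.choose k : ℝ) := Nat.cast_nonneg _
            nlinarith
        _ ≤ ∑ k ∈ Finset.range (n + 1), p ^ k * q ^ (n - k) * (n.choose k : ℝ) := by
            apply Finset.sum_le_sum_of_subset_of_nonneg
            · apply Finset.range_subset_range.mpr; omega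
            · intro k _ _
              positivity
        _ = 1 := hbinom
    have hpos : (0:ℝ) < p ^ m * q ^ (n - m) := by positivity
    have h5 : ((∑ k ∈ Finset.range (m + 1), n.choose k : ℕ) : ℝ) ≤ (p ^ m * q ^ (n - m))⁻¹ := by
      have := (le_div_iff₀ hpos).mpr hkey
      simpa [one_div] using this
    refine h5.trans (le_of_eq ?_)
    have hpm : p ^ m = Real.exp ((m : ℝ) * Real.log p) := by
      rw [Real.exp_nat_mul, Real.exp_log hp_pos]
    have hqm : q ^ (n - m) = Real.exp (((n - m : ℕ) : ℝ) * Real.log q) := by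
      rw [Real.exp_nat_mul, Real.exp_log hq_pos]
    rw [hpm, hqm, ← Real.exp_add, ← Real.exp_neg]
    congr 1
    have h1p : (1:ℝ) - p = q := by linarith
    have e3 : (n : ℝ) * p = m := by rw [hp_def]; field_simp
    have e4 : (n : ℝ) * q = ((n - m : ℕ) : ℝ) := by rw [hq_def]; field_simp
    rw [binEntropy, h1p]
    simp only [hp_def, hq_def] at *
    field_simp
    ring


lemma aux_case3 (n m N : ℕ) (hn : 0 < n) (hnm : n < m) (hN : 4 ≤ N) :
    ((N : ℝ)) ^ n ≤ Real.exp (2 * n * binEntropy ((m : ℝ) / n)) * (N : ℝ) ^ (2 * (m + 1)) := by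
  have hnR : (0:ℝ) < n := Nat.cast_pos.mpr hn
  have hmR : (0:ℝ) < m := Nat.cast_pos.mpr (by omega)
  set b : ℕ := m - n with hb_def
  have hb1 : 0 < b := by omega
  have hbR : (0:ℝ) < b := Nat.cast_pos.mpr hb1
  have hbn : (b : ℝ) = (m : ℝ) - n := by
    rw [hb_def]; push_cast [Nat.cast_sub hnm.le]; ring
  have hNR : (4:ℝ) ≤ N := by exact_mod_cast hN
  have hN0 : (0:ℝ) < N := by linarith
  -- identity for the entropy term
  have hid : (n : ℝ) * binEntropy ((m : ℝ) / n) =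
      -(m : ℝ) * Real.log m + (b : ℝ) * Real.log b + (n : ℝ) * Real.log n := by
    rw [binEntropy]
    have h1 : (1 : ℝ) - (m : ℝ) / n = -((b : ℝ) / n) := by
      field_simp [hbn]
      linarith [hbn]
    rw [h1, Real.log_neg_eq_log]
    rw [Real.log_div hmR.ne' hnR.ne', Real.log_div hbR.ne' hnR.ne']
    have hmb : (m : ℝ) = (b : ℝ) + n := by rw [hbn]; ring
    field_simp
    linear_combination (Real.log n) * hmb
  -- convexity of x log x
  have hconv : (m : ℝ) * Real.log ((m : ℝ) / 2) ≤ (b : ℝ) * Real.log b + (n : ℝ) * Real.log n := by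
    have := Real.convexOn_mul_log.2 (Set.mem_Ici.mpr hbR.le) (Set.mem_Ici.mpr hnR.le)
      (by norm_num : (0:ℝ) ≤ 1/2) (by norm_num : (0:ℝ) ≤ 1/2) (by norm_num)
    simp only [smul_eq_mul] at this
    have harg : (1:ℝ)/2 * b + 1/2 * n = (m : ℝ) / 2 := by rw [hbn]; ring
    rw [harg] at this
    have hm2 : (m : ℝ) / 2 > 0 := by positivity
    nlinarith [this]
  -- main log inequality
  have hlog2 : Real.log ((m : ℝ) / 2) = Real.log m - Real.log 2 := by
    rw [Real.log_div hmR.ne' (by norm_num)]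
  have hlogN : Real.log 4 ≤ Real.log N := Real.log_le_log (by norm_num) hNR
  have hlog4 : Real.log (4 : ℝ) = 2 * Real.log 2 := by
    have : (4 : ℝ) = 2 ^ 2 := by norm_num
    rw [this, Real.log_pow]; norm_num
  have hlogN0 : 0 ≤ Real.log N := Real.log_nonneg (by linarith)
  have hkey : (n : ℝ) * Real.log N ≤
      2 * n * binEntropy ((m : ℝ) / n) + (2 * (m + 1) : ℕ) * Real.log N := by
    have e1 : 2 * (n : ℝ) * binEntropy ((m : ℝ) / n) =
        2 * (-(m : ℝ) * Real.log m + (b : ℝ) * Real.log b + (n : ℝ) * Real.log n) := by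
      rw [← hid]; ring
    have e2 : -(m : ℝ) * Real.log m + (b : ℝ) * Real.log b + (n : ℝ) * Real.log n ≥
        -(m : ℝ) * Real.log 2 := by nlinarith [hconv, hlog2]
    have e3 : 2 * (m : ℝ) * Real.log 2 = (m : ℝ) * Real.log 4 := by rw [hlog4]; ring
    have e4 : ((2 * (m + 1) : ℕ) : ℝ) = 2 * (m : ℝ) + 2 := by push_cast; ring
    have hmn : (n : ℝ) ≤ m := by exact_mod_cast hnm.le
    have e5 : (m : ℝ) * Real.log 4 ≤ (m : ℝ) * Real.log N :=
      mul_le_mul_of_nonneg_left hlogN hmR.le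
    have e6 : (m : ℝ) * Real.log N ≤ (2 * (m : ℝ) + 2 - n) * Real.log N := by
      apply mul_le_mul_of_nonneg_right _ hlogN0
      linarith
    rw [e1, e4]
    nlinarith [e2, e3, e5, e6]
  -- convert to multiplicative form
  have hNpow : ∀ k : ℕ, ((N : ℝ)) ^ k = Real.exp ((k : ℝ) * Real.log N) := by
    intro k
    rw [Real.exp_nat_mul, Real.exp_log hN0]
  rw [hNpow n, hNpow (2 * (m + 1)), ← Real.exp_add]
  exact Real.exp_le_exp.mpr hkey

end Aux

/-- Concentration for the (0,m)-S-DUDE.  If `Ŝ` minimizes the estimated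
loss over the class `S_{0,m}^n` of tuples of single-symbol denoisers with at most `m`
switches, then
`P(L_{Ŝ}(xⁿ,Zⁿ) − D_{0,m}(xⁿ,Zⁿ) > ε) ≤ 2 exp(−n[ε²/(2L_max²) − 2{h(m/n) + (m+1)ln N/n}])`
where `N = |X̂|^{|Z|}`. -/
theorem sdude_zero_order_concentration {X Z Xh Ω : Type*}
    [Fintype X] [Fintype Z] [Fintype Xh]
    [Nonempty X] [Nonempty Z] [Nonempty Xh] [DecidableEq X] [DecidableEq Z] [DecidableEq Xh]
    [MeasurableSpace Z] [MeasurableSingletonClass Z]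
    [MeasurableSpace Ω] (μ : Measure Ω) [IsProbabilityMeasure μ]
    (n m : ℕ) (hn : 0 < n)
    (Λ : X → Xh → ℝ) (hΛ : ∀ a b, 0 ≤ Λ a b)
    (P : X → Z → ℝ) (H : Z → X → ℝ)
    (hPH : ∀ a b, ∑ z, P a z * H z b = if a = b then (1 : ℝ) else 0)
    (x : Fin n → X)
    (Zs : Fin n → Ω → Z) (hmeas : ∀ t, Measurable (Zs t))
    (hindep : iIndepFun Zs μ)
    (hdist : ∀ t z, (μ {ω | Zs t ω = z}).toReal = P (x t) z)
    (ℓ : Z → (Z → Xh) → ℝ)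
    (hℓ : ∀ z s0, ℓ z s0 = ∑ x', H z x' * ∑ z', Λ x' (s0 z') * P x' z')
    (Λmax ℓmax Lmax : ℝ)
    (hΛmax : Λmax = ⨆ p : X × Xh, Λ p.1 p.2)
    (hℓmax : ℓmax = (⨆ p : Z × (Z → Xh), ℓ p.1 p.2) - ⨅ p : Z × (Z → Xh), ℓ p.1 p.2)
    (hLmax : Lmax = Λmax + ℓmax)
    (C : Finset (Fin n → Z → Xh))
    (hC : C = Finset.univ.filter (fun S => (Finset.univ.filter (fun t : Fin n =>
        0 < t.val ∧
          S t ≠ S ⟨t.val - 1, Nat.lt_of_le_of_lt (Nat.sub_le _ _) t.isLt⟩)).card ≤ m))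
    (hCne : C.Nonempty)
    (Shat : Ω → Fin n → Z → Xh)
    (hShat : ∀ ω, Shat ω ∈ C ∧
      ∀ S ∈ C, ∑ t, ℓ (Zs t ω) (Shat ω t) ≤ ∑ t, ℓ (Zs t ω) (S t))
    (ε : ℝ) (hε : 0 < ε) :
    μ {ω | (1 / (n : ℝ)) * ∑ t, Λ (x t) (Shat ω t (Zs t ω)) -
          C.inf' hCne (fun S => (1 / (n : ℝ)) * ∑ t, Λ (x t) (S t (Zs t ω))) > ε} ≤
      ENNReal.ofReal (2 * Real.exp (-(n : ℝ) * (ε ^ 2 / (2 * Lmax ^ 2) -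
        2 * (binEntropy ((m : ℝ) / (n : ℝ)) +
          ((m : ℝ) + 1) * Real.log (Fintype.card (Z → Xh)) / (n : ℝ))))) := by
  classical
  have hnR : (0:ℝ) < n := Nat.cast_pos.mpr hn
  -- an auxiliary "trivial event" principle
  have hempty : (∀ ω : Ω, ∀ S ∈ C,
      (1 / (n : ℝ)) * ∑ t, Λ (x t) (Shat ω t (Zs t ω)) ≤
        (1 / (n : ℝ)) * ∑ t, Λ (x t) (S t (Zs t ω))) →
      μ {ω | (1 / (n : ℝ)) * ∑ t, Λ (x t) (Shat ω t (Zs t ω)) -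
          C.inf' hCne (fun S => (1 / (n : ℝ)) * ∑ t, Λ (x t) (S t (Zs t ω))) > ε} = 0 := by
    intro h
    have hset : {ω | (1 / (n : ℝ)) * ∑ t, Λ (x t) (Shat ω t (Zs t ω)) -
          C.inf' hCne (fun S => (1 / (n : ℝ)) * ∑ t, Λ (x t) (S t (Zs t ω))) > ε} = ∅ := by
      apply Set.eq_empty_iff_forall_notMem.mpr
      intro ω hω
      rw [Set.mem_setOf_eq] at hω
      have h2 : (1 / (n : ℝ)) * ∑ t, Λ (x t) (Shat ω t (Zs t ω)) ≤
          C.inf' hCne (fun S => (1 / (n : ℝ)) * ∑ t, Λ (x t) (S t (Zs t ω))) :=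
        Finset.le_inf' hCne _ (fun S hS => h ω S hS)
      rw [gt_iff_lt] at hω
      linarith
    rw [hset, measure_empty]
  -- basic bounds on Λ and ℓ
  have hΛub : ∀ a b, Λ a b ≤ Λmax := by
    intro a b
    rw [hΛmax]
    exact le_ciSup (f := fun p : X × Xh => Λ p.1 p.2)
      (Set.Finite.bddAbove (Set.finite_range _)) (a, b)
  have hℓub : ∀ z s, ℓ z s ≤ ⨆ p : Z × (Z → Xh), ℓ p.1 p.2 := by
    intro z s
    exact le_ciSup (f := fun p : Z × (Z → Xh) => ℓ p.1 p.2)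
      (Set.Finite.bddAbove (Set.finite_range _)) (z, s)
  have hℓlb : ∀ z s, (⨅ p : Z × (Z → Xh), ℓ p.1 p.2) ≤ ℓ z s := by
    intro z s
    exact ciInf_le (f := fun p : Z × (Z → Xh) => ℓ p.1 p.2)
      (Set.Finite.bddBelow (Set.finite_range _)) (z, s)
  have hΛnn : 0 ≤ Λmax :=
    le_trans (hΛ (Classical.arbitrary X) (Classical.arbitrary Xh)) (hΛub _ _)
  have hℓmaxnn : 0 ≤ ℓmax := by
    rw [hℓmax]
    have h1 := hℓlb (Classical.arbitrary Z) (Classical.arbitrary (Z → Xh))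
    have h2 := hℓub (Classical.arbitrary Z) (Classical.arbitrary (Z → Xh))
    linarith
  -- case: Xh is a subsingleton
  rcases subsingleton_or_nontrivial Xh with hXh | hXh
  · rw [hempty ?_]
    · exact zero_le
    intro ω S hS
    have : Shat ω = S := Subsingleton.elim _ _
    rw [this]
  -- case: Z is a subsingleton
  rcases subsingleton_or_nontrivial Z with hZ | hZ
  · have hXsub : ∀ a b : X, a = b := by
      intro a b
      by_contra hab
      have z0 : Z := Classical.arbitrary Z
      have h1 := hPH a b
      have h2 := hPH b b
      have h3 := hPH a a
      rw [Fintype.sum_subsingleton _ z0, if_neg hab] at h1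
      rw [Fintype.sum_subsingleton _ z0, if_pos rfl] at h2
      rw [Fintype.sum_subsingleton _ z0, if_pos rfl] at h3
      have hHne : H z0 b ≠ 0 := by
        intro h0; rw [h0, mul_zero] at h2; exact one_ne_zero h2.symm
      have hP0 : P a z0 = 0 := by
        rcases mul_eq_zero.mp h1 with h | h
        · exact h
        · exact absurd h hHne
      rw [hP0, zero_mul] at h3
      exact one_ne_zero h3.symm
    haveI hXsub' : Subsingleton X := ⟨hXsub⟩
    have hP1 : ∀ t (z : Z), P (x t) z = 1 := by
      intro t z
      rw [← hdist t z]
      have : {ω : Ω | Zs t ω = z} = Set.univ :=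
        Set.eq_univ_iff_forall.mpr (fun ω => Subsingleton.elim _ _)
      rw [this, measure_univ, ENNReal.toReal_one]
    have hH1 : ∀ t (z : Z), H z (x t) = 1 := by
      intro t z
      have h1 := hPH (x t) (x t)
      rw [Fintype.sum_subsingleton _ z, if_pos rfl, hP1 t z, one_mul] at h1
      exact h1
    have hℓeq : ∀ ω t (s : Z → Xh), ℓ (Zs t ω) s = Λ (x t) (s (Zs t ω)) := by
      intro ω t s
      rw [hℓ]
      rw [Fintype.sum_subsingleton
        (fun x' => H (Zs t ω) x' * ∑ z', Λ x' (s z') * P x' z') (x t)]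
      rw [Fintype.sum_subsingleton (fun z' => Λ (x t) (s z') * P (x t) z') (Zs t ω)]
      rw [hH1 t (Zs t ω), hP1 t (Zs t ω), one_mul, mul_one]
    rw [hempty ?_]
    · exact zero_le
    intro ω S hS
    have h2 := (hShat ω).2 S hS
    have h3 : ∑ t, Λ (x t) (Shat ω t (Zs t ω)) ≤ ∑ t, Λ (x t) (S t (Zs t ω)) := by
      calc ∑ t, Λ (x t) (Shat ω t (Zs t ω)) = ∑ t, ℓ (Zs t ω) (Shat ω t) := by
            exact Finset.sum_congr rfl (fun t _ => (hℓeq ω t _).symm)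
        _ ≤ ∑ t, ℓ (Zs t ω) (S t) := h2
        _ = ∑ t, Λ (x t) (S t (Zs t ω)) :=
            Finset.sum_congr rfl (fun t _ => hℓeq ω t _)
    apply mul_le_mul_of_nonneg_left h3
    positivity
  -- case: Lmax ≤ 0
  rcases le_or_gt Lmax 0 with hL0 | hLpos
  · have hΛmax0 : Λmax = 0 := by linarith [hLmax ▸ hL0]
    have hΛ0 : ∀ a b, Λ a b = 0 := by
      intro a b
      have := hΛub a b
      rw [hΛmax0] at this
      linarith [hΛ a b]
    rw [hempty ?_]
    · exact zero_le
    intro ω S hS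
    simp [hΛ0]
  -- MAIN CASE
  set N := Fintype.card (Z → Xh) with hN_def
  have hN1 : 1 ≤ N := Fintype.card_pos
  have hN1R : (1:ℝ) ≤ N := by exact_mod_cast hN1
  have hN4 : 4 ≤ N := by
    rw [hN_def, Fintype.card_fun]
    have h1 : 2 ≤ Fintype.card Xh := Fintype.one_lt_card
    have h2 : 2 ≤ Fintype.card Z := Fintype.one_lt_card
    calc (4:ℕ) = 2 ^ 2 := by norm_num
      _ ≤ Fintype.card Xh ^ 2 := Nat.pow_le_pow_left h1 2
      _ ≤ Fintype.card Xh ^ Fintype.card Z := Nat.pow_le_pow_right (by omega) h2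
  set ℓS := ⨆ p : Z × (Z → Xh), ℓ p.1 p.2 with hℓS_def
  set ℓI := ⨅ p : Z × (Z → Xh), ℓ p.1 p.2 with hℓI_def
  set a0 : ℝ := -ℓS with ha0_def
  set b0 : ℝ := Λmax - ℓI with hb0_def
  have hb0a0 : b0 - a0 = Lmax := by rw [hb0_def, ha0_def, hLmax, hℓmax]; ring
  have hab : a0 < b0 := by linarith
  set c : ℝ := (n:ℝ) * ε / 2 with hc_def
  have hc : 0 < c := by positivity
  set r : ℝ := Real.exp (-(n:ℝ) * ε^2 / (2 * Lmax^2)) with hr_def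
  -- per-denoiser facts
  have hgmeas : ∀ (S : Fin n → Z → Xh) (t : Fin n) (g : Z → ℝ),
      Measurable (fun ω => g (Zs t ω)) := fun S t g => (measurable_of_countable g).comp (hmeas t)
  have hmean0 : ∀ (S : Fin n → Z → Xh) (t : Fin n),
      ∫ ω, (Λ (x t) (S t (Zs t ω)) - ℓ (Zs t ω) (S t)) ∂μ = 0 := by
    intro S t
    set g : Z → ℝ := fun z => Λ (x t) (S t z) - ℓ z (S t) with hg_def
    haveI : IsProbabilityMeasure (μ.map (Zs t)) := Measure.isProbabilityMeasure_map (hmeas t).aemeasurable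
    have h1 : ∫ ω, g (Zs t ω) ∂μ = ∫ z, g z ∂(μ.map (Zs t)) :=
      (integral_map (hmeas t).aemeasurable (measurable_of_countable g).aestronglyMeasurable).symm
    have h2 : ∀ z, ((μ.map (Zs t)) {z}).toReal = P (x t) z := by
      intro z
      rw [Measure.map_apply (hmeas t) (measurableSet_singleton z), ← hdist t z]
      congr 1
    show ∫ ω, g (Zs t ω) ∂μ = 0
    rw [h1, integral_fintype (Integrable.of_finite)]
    simp_rw [measureReal_def, h2, smul_eq_mul, hg_def]
    have h4 : ∑ z, P (x t) z * ℓ z (S t) = ∑ z, P (x t) z * Λ (x t) (S t z) := by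
      simp_rw [hℓ]
      calc ∑ z, P (x t) z * (∑ x', H z x' * ∑ z', Λ x' (S t z') * P x' z')
          = ∑ z, ∑ x', P (x t) z * H z x' * ∑ z', Λ x' (S t z') * P x' z' := by
            apply Finset.sum_congr rfl
            intro z _
            rw [Finset.mul_sum]
            apply Finset.sum_congr rfl
            intro x' _
            ring
        _ = ∑ x', (∑ z, P (x t) z * H z x') * ∑ z', Λ x' (S t z') * P x' z' := by
            rw [Finset.sum_comm]
            apply Finset.sum_congr rfl
            intro x' _
            rw [Finset.sum_mul]
        _ = ∑ x', (if (x t) = x' then (1:ℝ) else 0) * ∑ z', Λ x' (S t z') * P x' z' := by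
            simp_rw [hPH]
        _ = ∑ z', Λ (x t) (S t z') * P (x t) z' := by
            simp only [ite_mul, one_mul, zero_mul]
            rw [Finset.sum_ite_eq]
            simp
        _ = ∑ z, P (x t) z * Λ (x t) (S t z) := by
            apply Finset.sum_congr rfl
            intro z _
            ring
    have h5 : ∑ z, P (x t) z * (Λ (x t) (S t z) - ℓ z (S t)) =
        (∑ z, P (x t) z * Λ (x t) (S t z)) - ∑ z, P (x t) z * ℓ z (S t) := by
      rw [← Finset.sum_sub_distrib]
      apply Finset.sum_congr rfl
      intro z _
      ring
    rw [h5, h4, sub_self]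
  have hbd0 : ∀ (S : Fin n → Z → Xh) (t : Fin n) (ω : Ω),
      (Λ (x t) (S t (Zs t ω)) - ℓ (Zs t ω) (S t)) ∈ Set.Icc a0 b0 := by
    intro S t ω
    constructor
    · rw [ha0_def]
      have := hℓub (Zs t ω) (S t)
      have := hΛ (x t) (S t (Zs t ω))
      rw [← hℓS_def] at *
      linarith [hℓub (Zs t ω) (S t), hΛ (x t) (S t (Zs t ω))]
    · rw [hb0_def]
      linarith [hℓlb (Zs t ω) (S t), hΛub (x t) (S t (Zs t ω))]
  -- the two tail bounds for each S
  have htail : ∀ S : Fin n → Z → Xh,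
      μ {ω | c ≤ ∑ t, (Λ (x t) (S t (Zs t ω)) - ℓ (Zs t ω) (S t))} ≤ ENNReal.ofReal r ∧
      μ {ω | c ≤ ∑ t, (ℓ (Zs t ω) (S t) - Λ (x t) (S t (Zs t ω)))} ≤ ENNReal.ofReal r := by
    intro S
    have hrEq : Real.exp (-2 * c ^ 2 / (n * (b0 - a0) ^ 2)) = r := by
      rw [hb0a0, hr_def, hc_def]
      congr 1
      field_simp
    constructor
    · have h1 := aux_hoeffding_tail μ n hn
        (fun t ω => Λ (x t) (S t (Zs t ω)) - ℓ (Zs t ω) (S t))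
        (fun t => hgmeas S t (fun z => Λ (x t) (S t z) - ℓ z (S t)))
        (hindep.comp (fun t z => Λ (x t) (S t z) - ℓ z (S t))
          (fun t => measurable_of_countable _))
        a0 b0 hab (fun t ω => hbd0 S t ω) (fun t => hmean0 S t) c hc
      rw [hrEq] at h1
      exact h1
    · have h1 := aux_hoeffding_tail μ n hn
        (fun t ω => ℓ (Zs t ω) (S t) - Λ (x t) (S t (Zs t ω)))
        (fun t => hgmeas S t (fun z => ℓ z (S t) - Λ (x t) (S t z)))
        (hindep.comp (fun t z => ℓ z (S t) - Λ (x t) (S t z))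
          (fun t => measurable_of_countable _))
        (-b0) (-a0) (by linarith)
        (fun t ω => by
          have h1 := (hbd0 S t ω).1
          have h2 := (hbd0 S t ω).2
          exact ⟨by simpa [neg_sub] using neg_le_neg h2, by simpa [neg_sub] using neg_le_neg h1⟩)
        (fun t => by
          have heq : (fun ω => ℓ (Zs t ω) (S t) - Λ (x t) (S t (Zs t ω)))
              = fun ω => -(Λ (x t) (S t (Zs t ω)) - ℓ (Zs t ω) (S t)) := by
            funext ω; ring
          rw [heq, integral_neg, hmean0 S t, neg_zero])
        c hc
      have hrEq2 : Real.exp (-2 * c ^ 2 / (n * (-a0 - -b0) ^ 2)) = r := by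
        rw [← hrEq]
        congr 2
        ring
      rw [hrEq2] at h1
      exact h1
  -- inclusion of the event in the union of tails
  have hsub : {ω | (1 / (n : ℝ)) * ∑ t, Λ (x t) (Shat ω t (Zs t ω)) -
          C.inf' hCne (fun S => (1 / (n : ℝ)) * ∑ t, Λ (x t) (S t (Zs t ω))) > ε} ⊆
      ⋃ S ∈ C, ({ω | c ≤ ∑ t, (Λ (x t) (S t (Zs t ω)) - ℓ (Zs t ω) (S t))} ∪
        {ω | c ≤ ∑ t, (ℓ (Zs t ω) (S t) - Λ (x t) (S t (Zs t ω)))}) := by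
    intro ω hω
    rw [Set.mem_setOf_eq, gt_iff_lt] at hω
    obtain ⟨S0, hS0C, hinf0⟩ :=
      Finset.exists_mem_eq_inf' hCne (fun S => (1 / (n : ℝ)) * ∑ t, Λ (x t) (S t (Zs t ω)))
    rw [hinf0] at hω
    have hl := (hShat ω).2 S0 hS0C
    have h7 : (n:ℝ) * ε < (∑ t, Λ (x t) (Shat ω t (Zs t ω))) -
        ∑ t, Λ (x t) (S0 t (Zs t ω)) := by
      have h8 : (1/(n:ℝ)) * (∑ t, Λ (x t) (Shat ω t (Zs t ω))) -
          (1/(n:ℝ)) * (∑ t, Λ (x t) (S0 t (Zs t ω))) =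
          ((∑ t, Λ (x t) (Shat ω t (Zs t ω))) - ∑ t, Λ (x t) (S0 t (Zs t ω))) / n := by
        ring
      rw [h8] at hω
      rw [lt_div_iff₀ hnR] at hω
      linarith
    by_cases hcase : c ≤ ∑ t, (Λ (x t) (Shat ω t (Zs t ω)) - ℓ (Zs t ω) (Shat ω t))
    · apply Set.mem_iUnion₂.mpr
      exact ⟨Shat ω, (hShat ω).1, Or.inl hcase⟩
    · apply Set.mem_iUnion₂.mpr
      refine ⟨S0, hS0C, Or.inr ?_⟩
      rw [Set.mem_setOf_eq]
      push_neg at hcase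
      rw [Finset.sum_sub_distrib] at hcase
      rw [Finset.sum_sub_distrib]
      rw [hc_def] at *
      linarith
  -- put everything together
  calc μ {ω | (1 / (n : ℝ)) * ∑ t, Λ (x t) (Shat ω t (Zs t ω)) -
          C.inf' hCne (fun S => (1 / (n : ℝ)) * ∑ t, Λ (x t) (S t (Zs t ω))) > ε}
      ≤ μ (⋃ S ∈ C, ({ω | c ≤ ∑ t, (Λ (x t) (S t (Zs t ω)) - ℓ (Zs t ω) (S t))} ∪
          {ω | c ≤ ∑ t, (ℓ (Zs t ω) (S t) - Λ (x t) (S t (Zs t ω)))})) := measure_mono hsub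
    _ ≤ ∑ S ∈ C, μ ({ω | c ≤ ∑ t, (Λ (x t) (S t (Zs t ω)) - ℓ (Zs t ω) (S t))} ∪
          {ω | c ≤ ∑ t, (ℓ (Zs t ω) (S t) - Λ (x t) (S t (Zs t ω)))}) :=
        measure_biUnion_finset_le C _
    _ ≤ ∑ _S ∈ C, (ENNReal.ofReal r + ENNReal.ofReal r) := by
        apply Finset.sum_le_sum
        intro S _
        exact le_trans (measure_union_le _ _) (add_le_add (htail S).1 (htail S).2)
    _ = C.card • (ENNReal.ofReal r + ENNReal.ofReal r) := Finset.sum_const _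
    _ = ENNReal.ofReal ((C.card : ℝ) * (r + r)) := by
        rw [← ENNReal.ofReal_add (Real.exp_nonneg _) (Real.exp_nonneg _)]
        rw [nsmul_eq_mul, ← ENNReal.ofReal_natCast C.card,
          ← ENNReal.ofReal_mul (Nat.cast_nonneg _)]
    _ ≤ ENNReal.ofReal (2 * Real.exp (-(n : ℝ) * (ε ^ 2 / (2 * Lmax ^ 2) -
        2 * (binEntropy ((m : ℝ) / (n : ℝ)) +
          ((m : ℝ) + 1) * Real.log N / (n : ℝ))))) := by
        apply ENNReal.ofReal_le_ofReal
        -- the counting bound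
        have hcardR : (C.card : ℝ) ≤
            Real.exp (2 * n * binEntropy ((m : ℝ) / n)) * (N:ℝ) ^ (2 * (m + 1)) := by
          have hCuniv : (C.card : ℝ) ≤ (N:ℝ) ^ n := by
            have h1 : C.card ≤ N ^ n := by
              calc C.card ≤ Fintype.card (Fin n → Z → Xh) := Finset.card_le_univ C
                _ = N ^ n := by rw [Fintype.card_fun, Fintype.card_fin, hN_def]
            exact_mod_cast h1
          rcases le_or_gt (2 * m) n with hc1 | hc2
          · -- 2m ≤ n : use the entropy bound on binomial sums
            have hmn : m ≤ n := by omega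
            have hhnn : 0 ≤ binEntropy ((m:ℝ)/n) := by
              apply binEntropy_nn (by positivity)
              rw [div_le_one hnR]
              exact_mod_cast hmn
            have h1 : C.card ≤ (∑ k ∈ Finset.range (m + 1), n.choose k) * N ^ (m + 1) := by
              have h2 : C = Finset.univ.filter
                  (fun S : Fin n → Z → Xh => (auxSw n S).card ≤ m) := by
                rw [hC]; rfl
              rw [h2, hN_def]
              exact aux_count n m
            calc (C.card : ℝ)
                ≤ ((∑ k ∈ Finset.range (m + 1), n.choose k : ℕ) : ℝ) * (N:ℝ) ^ (m + 1) := by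
                  exact_mod_cast h1
              _ ≤ Real.exp (n * binEntropy ((m:ℝ)/n)) * (N:ℝ) ^ (m + 1) :=
                  mul_le_mul_of_nonneg_right (aux_sum_choose n m hn hc1) (by positivity)
              _ ≤ Real.exp (2 * n * binEntropy ((m:ℝ)/n)) * (N:ℝ) ^ (2 * (m + 1)) := by
                  apply mul_le_mul
                  · apply Real.exp_le_exp.mpr
                    nlinarith [hhnn, hnR.le]
                  · apply pow_le_pow_right₀ hN1R (by omega)
                  · positivity
                  · positivity
          · rcases le_or_gt m n with hc3 | hc4
            · -- n < 2m, m ≤ n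
              have hhnn : 0 ≤ binEntropy ((m:ℝ)/n) := by
                apply binEntropy_nn (by positivity)
                rw [div_le_one hnR]
                exact_mod_cast hc3
              calc (C.card : ℝ) ≤ (N:ℝ) ^ n := hCuniv
                _ ≤ (N:ℝ) ^ (2 * (m + 1)) := pow_le_pow_right₀ hN1R (by omega)
                _ ≤ Real.exp (2 * n * binEntropy ((m:ℝ)/n)) * (N:ℝ) ^ (2 * (m + 1)) := by
                    apply le_mul_of_one_le_left (by positivity)
                    apply Real.one_le_exp
                    positivity
            · -- m > n
              exact hCuniv.trans (aux_case3 n m N hn hc4 hN4)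
        -- exponent manipulation
        have hexp : -(n : ℝ) * (ε ^ 2 / (2 * Lmax ^ 2) -
            2 * (binEntropy ((m : ℝ) / (n : ℝ)) + ((m : ℝ) + 1) * Real.log N / (n : ℝ)))
            = (-(n:ℝ) * ε^2 / (2 * Lmax^2)) +
              (2 * n * binEntropy ((m : ℝ) / n) + (2 * ((m:ℝ) + 1)) * Real.log N) := by
          field_simp
          ring
        rw [hexp, Real.exp_add, Real.exp_add]
        have hNpow : Real.exp ((2 * ((m:ℝ) + 1)) * Real.log N) = (N:ℝ) ^ (2 * (m + 1)) := by
          have hcast : (2 * ((m:ℝ) + 1)) = ((2 * (m + 1) : ℕ) : ℝ) := by push_cast; ring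
          rw [hcast, Real.exp_nat_mul, Real.exp_log (by positivity : (0:ℝ) < N)]
        rw [hNpow, ← hr_def]
        have hrpos : 0 < r := Real.exp_pos _
        calc (C.card : ℝ) * (r + r) = 2 * r * (C.card : ℝ) := by ring
          _ ≤ 2 * r * (Real.exp (2 * n * binEntropy ((m : ℝ) / n)) * (N:ℝ) ^ (2 * (m + 1))) := by
              apply mul_le_mul_of_nonneg_left hcardR (by positivity)
          _ = 2 * (r * (Real.exp (2 * n * binEntropy ((m : ℝ) / n)) * (N:ℝ) ^ (2 * (m + 1)))) := by
              ring
end
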